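/- If 1 ≤ n ≤ m, then the burning number of the comb graph C_{n,m} is at least √(nm/2). -/

import Mathlib

noncomputable def burningNumber {V : Type*} (G : SimpleGraph V) : ℕ :=
  sInf {k | ∃ v : Fin k → V, ∀ u : V, ∃ i : Fin k, G.dist (v i) u ≤ k - 1 - i.val}

def comb (n m : ℕ) : SimpleGraph (Fin n × Fin m) :=
  SimpleGraph.fromRel (fun p q =>
    (p.1 = q.1 ∧ p.2.val + 1 = q.2.val) ∨
    (p.2.val = 0 ∧ q.2.val = 0 ∧ p.1.val + 1 = q.1.val))

private lemma sum_odd (k : ℕ) : ∑ j ∈ Finset.range k, (2 * j + 1) = k ^ 2 := by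
  induction k with
  | zero => simp
  | succ j ih => rw [Finset.sum_range_succ, ih]; ring

private lemma walk_bound {V : Type*} {G : SimpleGraph V} (f : V → ℤ)
    (hf : ∀ a b, G.Adj a b → |f a - f b| ≤ 1) {u v : V} (w : G.Walk u v) :
    |f u - f v| ≤ (w.length : ℤ) := by
  induction w with
  | nil => simp
  | @cons u b v h p ih =>
    have h1 := hf _ _ h
    have h2 := abs_sub_le (f u) (f b) (f v)
    simp only [SimpleGraph.Walk.length_cons]
    push_cast
    linarith

private lemma dist_bound {V : Type*} {G : SimpleGraph V} (f : V → ℤ)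
    (hf : ∀ a b, G.Adj a b → |f a - f b| ≤ 1) {u v : V} (h : G.Reachable u v) :
    |f u - f v| ≤ (G.dist u v : ℤ) := by
  obtain ⟨w, hw⟩ := h.exists_walk_length_eq_dist
  rw [← hw]
  exact walk_bound f hf w

private lemma comb_adj {n m : ℕ} {a b : Fin n × Fin m} :
    (comb n m).Adj a b ↔ a ≠ b ∧
      (((a.1 = b.1 ∧ a.2.val + 1 = b.2.val) ∨ (a.2.val = 0 ∧ b.2.val = 0 ∧ a.1.val + 1 = b.1.val)) ∨
       ((b.1 = a.1 ∧ b.2.val + 1 = a.2.val) ∨ (b.2.val = 0 ∧ a.2.val = 0 ∧ b.1.val + 1 = a.1.val))) := by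
  simp [comb, SimpleGraph.fromRel_adj]

private lemma comb_reach_base {n m : ℕ} (s : Fin n) :
    ∀ t (ht : t < m), (comb n m).Reachable (s, ⟨t, ht⟩) (s, ⟨0, Nat.pos_of_ne_zero (by omega)⟩) := by
  intro t
  induction t with
  | zero => intro ht; rfl
  | succ j ih =>
    intro ht
    have hj : j < m := by omega
    have hadj : (comb n m).Adj (s, ⟨j, hj⟩) (s, ⟨j + 1, ht⟩) := by
      rw [comb_adj]
      refine ⟨?_, Or.inl (Or.inl ⟨rfl, rfl⟩)⟩
      simp [Prod.ext_iff, Fin.ext_iff]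
    exact (hadj.reachable.symm).trans (ih hj)

private lemma comb_reach_spine {n m : ℕ} (hm : 0 < m) :
    ∀ s (hs : s < n), (comb n m).Reachable (⟨s, hs⟩, ⟨0, hm⟩) (⟨0, by omega⟩, ⟨0, hm⟩) := by
  intro s
  induction s with
  | zero => intro hs; rfl
  | succ j ih =>
    intro hs
    have hj : j < n := by omega
    have hadj : (comb n m).Adj (⟨j, hj⟩, ⟨0, hm⟩) (⟨j + 1, hs⟩, ⟨0, hm⟩) := by
      rw [comb_adj]
      refine ⟨?_, Or.inl (Or.inr ⟨rfl, rfl, rfl⟩)⟩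
      simp [Prod.ext_iff, Fin.ext_iff]
    exact (hadj.reachable.symm).trans (ih hj)

private lemma comb_reach {n m : ℕ} (p q : Fin n × Fin m) : (comb n m).Reachable p q := by
  obtain ⟨⟨s, hs⟩, ⟨t, ht⟩⟩ := p
  obtain ⟨⟨s', hs'⟩, ⟨t', ht'⟩⟩ := q
  have hm : 0 < m := by omega
  refine ((comb_reach_base _ t ht).trans ?_).trans (comb_reach_base _ t' ht').symm
  exact (comb_reach_spine hm s hs).trans (comb_reach_spine hm s' hs').symm

theorem burning_comb_tooth_lower (n m : ℕ) (hn : 1 ≤ n) (hnm : n ≤ m) :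
    Real.sqrt ((n : ℝ) * m / 2) ≤ (burningNumber (comb n m) : ℝ) := by
  classical
  have hm : 1 ≤ m := le_trans hn hnm
  set k := burningNumber (comb n m) with hkdef
  have key : n * m ≤ 2 * k ^ 2 := by
    -- the defining set is nonempty
    have hne : {k | ∃ v : Fin k → Fin n × Fin m,
        ∀ u, ∃ i : Fin k, (comb n m).dist (v i) u ≤ k - 1 - i.val}.Nonempty := by
      refine ⟨n * m, fun i => finProdFinEquiv.symm i, fun u => ⟨finProdFinEquiv u, ?_⟩⟩
      simp [SimpleGraph.dist_self]
    have hmem : k ∈ {k | ∃ v : Fin k → Fin n × Fin m,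
        ∀ u, ∃ i : Fin k, (comb n m).dist (v i) u ≤ k - 1 - i.val} := by
      rw [hkdef, burningNumber]
      exact Nat.sInf_mem hne
    obtain ⟨v, hv⟩ := hmem
    -- k ≥ 1
    rcases Nat.eq_zero_or_pos k with hk0 | hk0
    · exfalso
      obtain ⟨i, -⟩ := hv (⟨0, by omega⟩, ⟨0, by omega⟩)
      rw [hk0] at i
      exact i.elim0
    rcases le_or_gt m k with hmk | hkm
    · nlinarith
    -- main case: 1 ≤ k < m
    have claim : ∀ p : Fin n × Fin m, k ≤ p.2.val → ∃ i : Fin k,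
        (v i).1 = p.1 ∧ (v i).2.val ≤ p.2.val + (k - 1 - i.val) ∧
        p.2.val ≤ (v i).2.val + (k - 1 - i.val) := by
      intro p hp
      obtain ⟨i, hi⟩ := hv p
      have hr : k - 1 - i.val ≤ k - 1 := Nat.sub_le _ _
      have reach := comb_reach (v i) p
      -- first coordinate equal
      have hf1 : ∀ a b : Fin n × Fin m, (comb n m).Adj a b →
          |(if a.1 = p.1 then (a.2.val : ℤ) else 0) - (if b.1 = p.1 then (b.2.val : ℤ) else 0)| ≤ 1 := by
        intro a b hab
        rw [comb_adj] at hab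
        obtain ⟨-, hab⟩ := hab
        rw [abs_le]
        rcases hab with (⟨h1, h2⟩ | ⟨h1, h2, h3⟩) | (⟨h1, h2⟩ | ⟨h1, h2, h3⟩) <;>
          split_ifs with ha hb hb <;>
            (constructor <;> push_cast <;> omega)
      have hd1 := dist_bound _ hf1 reach
      have hd1' : |(if (v i).1 = p.1 then ((v i).2.val : ℤ) else 0) - (p.2.val : ℤ)| ≤
          ((k - 1 - i.val : ℕ) : ℤ) := by
        simp only [if_pos rfl] at hd1
        exact le_trans hd1 (by exact_mod_cast hi)
      have heq : (v i).1 = p.1 := by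
        by_contra hne'
        rw [if_neg hne'] at hd1'
        rw [abs_le] at hd1'
        have : ((k - 1 - i.val : ℕ) : ℤ) < (p.2.val : ℤ) := by
          have : k - 1 - i.val < k := by omega
          exact_mod_cast lt_of_lt_of_le this (by exact_mod_cast hp)
        omega
      -- second coordinate close
      have hf2 : ∀ a b : Fin n × Fin m, (comb n m).Adj a b →
          |((a.2.val : ℤ)) - (b.2.val : ℤ)| ≤ 1 := by
        intro a b hab
        rw [comb_adj] at hab
        obtain ⟨-, hab⟩ := hab
        rw [abs_le]
        rcases hab with (⟨h1, h2⟩ | ⟨h1, h2, h3⟩) | (⟨h1, h2⟩ | ⟨h1, h2, h3⟩) <;>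
          constructor <;> push_cast <;> omega
      have hd2 := dist_bound _ hf2 reach
      have hd2' : |((v i).2.val : ℤ) - (p.2.val : ℤ)| ≤ ((k - 1 - i.val : ℕ) : ℤ) :=
        le_trans hd2 (by exact_mod_cast hi)
      rw [abs_le] at hd2'
      exact ⟨i, heq, by omega, by omega⟩
    -- the chooser function
    let P : Fin n × Fin m → Fin k → Prop := fun p i =>
      (v i).1 = p.1 ∧ (v i).2.val ≤ p.2.val + (k - 1 - i.val) ∧
        p.2.val ≤ (v i).2.val + (k - 1 - i.val)
    let c : Fin n × Fin m → Fin k := fun p =>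
      if h : ∃ i : Fin k, P p i then h.choose else ⟨0, hk0⟩
    have hc : ∀ p : Fin n × Fin m, k ≤ p.2.val → P p (c p) := by
      intro p hp
      have h : ∃ i : Fin k, P p i := claim p hp
      simp only [c, dif_pos h]
      exact h.choose_spec
    -- n ≤ k
    have hnk : n ≤ k := by
      have hinj : Function.Injective (fun s : Fin n => c (s, ⟨k, hkm⟩)) := by
        intro s s' hss
        have hss' : c (s, ⟨k, hkm⟩) = c (s', ⟨k, hkm⟩) := hss
        have h1 := (hc (s, ⟨k, hkm⟩) (le_refl k)).1
        have h2 := (hc (s', ⟨k, hkm⟩) (le_refl k)).1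
        rw [hss'] at h1
        simpa using h1.symm.trans h2
      simpa using Fintype.card_le_of_injective _ hinj
    -- counting high vertices per fiber
    set S : Finset (Fin n × Fin m) :=
      Finset.univ.filter (fun p : Fin n × Fin m => k ≤ p.2.val) with hS
    have h1 : n * (m - k) ≤ S.card := by
      have := Finset.card_le_card_of_injOn (s := Finset.univ) (t := S)
        (fun q : Fin n × Fin (m - k) => ((q.1, ⟨k + q.2.val, by omega⟩) : Fin n × Fin m))
        (fun q _ => by
          simp only [hS, Finset.mem_coe, Finset.mem_filter, Finset.mem_univ, true_and]
          omega)
        (by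
          intro a _ b _ hab
          simp only [Prod.ext_iff, Fin.ext_iff] at hab ⊢
          omega)
      simpa using this
    have h2 : S.card = ∑ i : Fin k, (S.filter (fun p => c p = i)).card :=
      Finset.card_eq_sum_card_fiberwise (fun p _ => Finset.mem_univ (c p))
    have h3 : ∀ i : Fin k, (S.filter (fun p => c p = i)).card ≤ 2 * (k - 1 - i.val) + 1 := by
      intro i
      have hcard := Finset.card_le_card_of_injOn (fun p : Fin n × Fin m => p.2.val)
        (s := S.filter (fun p => c p = i))
        (t := Finset.Icc ((v i).2.val - (k - 1 - i.val)) ((v i).2.val + (k - 1 - i.val)))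
        (by
          intro p hp
          simp only [hS, Finset.mem_coe, Finset.mem_filter, Finset.mem_univ, true_and] at hp
          have h := hc p hp.1
          rw [hp.2] at h
          simp only [Finset.mem_coe, Finset.mem_Icc]
          omega)
        (by
          intro a ha b hb hab
          simp only [hS, Finset.mem_filter, Finset.mem_univ, true_and, Finset.coe_filter,
            Set.mem_setOf_eq] at ha hb
          have hA := hc a ha.1
          have hB := hc b hb.1
          rw [ha.2] at hA
          rw [hb.2] at hB
          have : a.1 = b.1 := by rw [← hA.1, ← hB.1]
          exact Prod.ext this (Fin.ext hab))
      refine le_trans hcard ?_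
      rw [Nat.card_Icc]
      omega
    have h4 : ∑ i : Fin k, (2 * (k - 1 - i.val) + 1) = k ^ 2 := by
      rw [Fin.sum_univ_eq_sum_range (fun j => 2 * (k - 1 - j) + 1) k]
      have := Finset.sum_range_reflect (fun j => 2 * j + 1) k
      calc ∑ j ∈ Finset.range k, (2 * (k - 1 - j) + 1)
          = ∑ j ∈ Finset.range k, (2 * j + 1) := this
        _ = k ^ 2 := sum_odd k
    have h5 : n * (m - k) ≤ k ^ 2 := by
      calc n * (m - k) ≤ S.card := h1
        _ = ∑ i : Fin k, (S.filter (fun p => c p = i)).card := h2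
        _ ≤ ∑ i : Fin k, (2 * (k - 1 - i.val) + 1) := Finset.sum_le_sum (fun i _ => h3 i)
        _ = k ^ 2 := h4
    have hsplit : n * m = n * (m - k) + n * k := by
      rw [← Nat.mul_add, Nat.sub_add_cancel (le_of_lt hkm)]
    nlinarith
  -- conclude with real arithmetic
  have h2k : ((n : ℝ) * m) / 2 ≤ (k : ℝ) ^ 2 := by
    have : ((n * m : ℕ) : ℝ) ≤ ((2 * k ^ 2 : ℕ) : ℝ) := by exact_mod_cast key
    push_cast at this
    linarith
  calc Real.sqrt ((n : ℝ) * m / 2) ≤ Real.sqrt ((k : ℝ) ^ 2) := Real.sqrt_le_sqrt h2k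
    _ = (k : ℝ) := Real.sqrt_sq (by positivity)
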